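/- For a strictly positive distribution, if X is weakly relevant (relevant but Y ⫫ X | V \ {X}) and the distribution satisfies the intersection property, then there exists another variable X' ≠ X such that removing X' restores dependence in some conditioning, i.e., there exists B ⊆ V \ {X, X'} with Y ⫫̸ X | B. Equivalently: a weakly relevant variable has a minimal conditioning set B that is a proper subset of V \ {X}. -/
import Mathlib


open Finset

/-- For a strictly positive distribution (strict positivity entering via
the intersection axiom, valid for such distributions), if `X` is weakly relevant —
relevant but `Y ⫫ X | V \ {X}` — then there exists another variable `X' ≠ X` in `V`
such that some conditioning set avoiding both `X` and `X'` makes `X` dependent on `Y`: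
`∃ B ⊆ V \ {X, X'}` with `Y ⫫̸ X | B`.  Equivalently, a weakly relevant variable has a
minimal conditioning set that is a proper subset of `V \ {X}`.  Here `y` is the output,
`V = univ \ {y}`, and `CI` is an abstract conditional-independence relation satisfying
the semi-graphoid and intersection axioms. -/
theorem weakly_relevant_has_proper_minimal_conditioning
    {ι : Type*} [Fintype ι] [DecidableEq ι]
    (CI : Finset ι → Finset ι → Finset ι → Prop)
    (symm : ∀ S T R, CI S T R → CI T S R)
    (decomp : ∀ S T U R, CI S (T ∪ U) R → CI S T R)
    (weakUnion : ∀ S T U R, CI S (T ∪ U) R → CI S T (R ∪ U))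
    (contraction : ∀ S T U R, CI S T R → CI S U (R ∪ T) → CI S (T ∪ U) R)
    (intersection : ∀ S T U R, CI S T (R ∪ U) → CI S U (R ∪ T) → CI S (T ∪ U) R)
    (y X : ι) (hXy : X ≠ y)
    (hrel : ∃ B ⊆ (Finset.univ.erase y).erase X, ¬ CI {y} {X} B)
    (hnotstrong : CI {y} {X} ((Finset.univ.erase y).erase X)) :
    ∃ X' ∈ Finset.univ.erase y, X' ≠ X ∧
      ∃ B ⊆ ((Finset.univ.erase y).erase X).erase X', ¬ CI {y} {X} B := by
  obtain ⟨B, hB, hnCI⟩ := hrel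
  have hne : B ≠ (Finset.univ.erase y).erase X := by
    rintro rfl; exact hnCI hnotstrong
  have hss : B ⊂ (Finset.univ.erase y).erase X := lt_of_le_of_ne hB hne
  obtain ⟨X', hX'A, hX'B⟩ := Finset.exists_of_ssubset hss
  refine ⟨X', Finset.mem_of_mem_erase hX'A, Finset.ne_of_mem_erase hX'A, B, ?_, hnCI⟩
  intro b hb
  exact Finset.mem_erase.2 ⟨fun h => hX'B (h ▸ hb), hB hb⟩
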